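/- arXiv:1411.4174 — 2 statements merged into one kernel-verified Lean document; each statement's English description precedes it below -/
import Mathlib

section
/- For b in the closed unit ball of H^∞ with b not constantly 1, the function S^*b, i.e. z ↦ (b(z) - b(0))/z, belongs to the de Branges–Rovnyak space ℋ(b). -/
noncomputable section

open ContinuousLinearMap

/-- The Hardy space `H²` of the unit disc, realized as the Hilbert space of square-summable
Taylor-coefficient sequences. -/
abbrev H2 : Type := lp (fun _ : ℕ => ℂ) 2

/-- The value at `z` (for `z` in the unit disc) of the analytic function whose sequence of
Taylor coefficients is `f ∈ H²`. -/
def H2eval (f : H2) (z : ℂ) : ℂ := ∑' n : ℕ, f n * z ^ n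

/-- `b` belongs to the closed unit ball of `H^∞`: it is analytic and bounded by `1` on the
open unit disc. -/
def InUnitBallHinf (b : ℂ → ℂ) : Prop :=
  DifferentiableOn ℂ b (Metric.ball 0 1) ∧ ∀ z ∈ Metric.ball (0 : ℂ) 1, ‖b z‖ ≤ 1

/-- `T` is the analytic Toeplitz operator `T_b` on `H²`, i.e. the operator of multiplication
by `b`. -/
def IsMulOp (b : ℂ → ℂ) (T : H2 →L[ℂ] H2) : Prop :=
  ∀ (f : H2), ∀ z ∈ Metric.ball (0 : ℂ) 1, H2eval (T f) z = b z * H2eval f z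

/-- The norm of `h` in the operator-range space `M(T)` (the range of `T` with the inner
product making `T` a unitary from `(ker T)^⊥` onto it): the infimum (in fact the minimum) of
the norms of the `T`-preimages of `h`. -/
def rangeNorm (T : H2 →L[ℂ] H2) (h : H2) : ℝ :=
  sInf {r : ℝ | ∃ ξ : H2, T ξ = h ∧ ‖ξ‖ = r}

open scoped InnerProductSpace ComplexConjugate ENNReal NNReal

namespace Stmt14Aux

lemma summable_eval (f : H2) {z : ℂ} (hz : ‖z‖ < 1) :
    Summable (fun n : ℕ => f n * z ^ n) := by
  refine Summable.of_norm_bounded (g := fun n => ‖f‖ * ‖z‖ ^ n)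
    ((summable_geometric_of_lt_one (norm_nonneg z) hz).mul_left _) (fun n => ?_)
  rw [norm_mul, norm_pow]
  exact mul_le_mul_of_nonneg_right (lp.norm_apply_le_norm (by norm_num) f n)
    (pow_nonneg (norm_nonneg z) n)

lemma hasSum_eval (f : H2) {z : ℂ} (hz : ‖z‖ < 1) :
    HasSum (fun n : ℕ => f n * z ^ n) (H2eval f z) :=
  (summable_eval f hz).hasSum

lemma hasFPowerSeries (f : H2) :
    HasFPowerSeriesOnBall (H2eval f) (FormalMultilinearSeries.ofScalars ℂ (fun n => f n)) 0 1 := by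
  constructor
  · refine FormalMultilinearSeries.le_radius_of_bound _ ‖f‖ (fun n => ?_)
    rw [FormalMultilinearSeries.ofScalars_norm]
    simpa using lp.norm_apply_le_norm (by norm_num) f n
  · norm_num
  · intro y hy
    rw [EMetric.mem_ball, edist_zero_right] at hy
    have hy' : ‖y‖ < 1 := by rw [← ofReal_norm, ENNReal.ofReal_lt_one] at hy; exact hy
    have hfun : (fun n : ℕ => (FormalMultilinearSeries.ofScalars ℂ (fun n => f n) n) fun _ => y)
        = fun n : ℕ => f n * y ^ n := by
      funext n
      rw [FormalMultilinearSeries.ofScalars_apply_eq, smul_eq_mul]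
    rw [zero_add, hfun]
    exact hasSum_eval f hy'

lemma eval_injective {f g : H2} (h : ∀ z ∈ Metric.ball (0:ℂ) 1, H2eval f z = H2eval g z) :
    f = g := by
  have h1 := (hasFPowerSeries f).hasFPowerSeriesAt
  have h2 := (hasFPowerSeries g).hasFPowerSeriesAt
  have heq : H2eval f =ᶠ[nhds 0] H2eval g :=
    Filter.eventuallyEq_of_mem (Metric.ball_mem_nhds (0:ℂ) one_pos) h
  have := h1.eq_formalMultilinearSeries_of_eventually h2 heq
  have hcoef : (fun n => f n) = (fun n => g n) :=
    FormalMultilinearSeries.ofScalars_series_injective (𝕜 := ℂ) (E := ℂ) this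
  ext n
  exact congrFun hcoef n

def shiftFun (g : H2) : ℕ → ℂ := fun n => match n with | 0 => 0 | k+1 => g k

lemma memℓp_shiftFun (g : H2) : Memℓp (shiftFun g) 2 := by
  apply memℓp_gen
  have h2 : ((2:ℝ≥0∞).toReal) = (2:ℝ) := by norm_num
  rw [h2]
  have hg : Summable (fun n => ‖g n‖ ^ (2:ℝ)) := by
    have := lp.memℓp g
    rw [memℓp_gen_iff (by norm_num : (0:ℝ) < (2:ℝ≥0∞).toReal)] at this
    simpa [h2] using this
  have : (fun n => ‖shiftFun g (n+1)‖ ^ (2:ℝ)) = fun n => ‖g n‖ ^ (2:ℝ) := rfl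
  exact (summable_nat_add_iff 1).mp (this ▸ hg)

def shiftL : H2 →ₗ[ℂ] H2 where
  toFun g := ⟨shiftFun g, memℓp_shiftFun g⟩
  map_add' g h := by
    ext n
    cases n <;> simp [shiftFun, lp.coeFn_add] <;> show _ = shiftFun g _ + shiftFun h _ <;> simp [shiftFun]
  map_smul' c g := by
    ext n
    cases n <;> simp [shiftFun, lp.coeFn_smul]

lemma norm_sq_tsum (u : H2) : ‖u‖ ^ 2 = ∑' n, ‖u n‖ ^ 2 := by
  have h := lp.norm_rpow_eq_tsum (p := 2) (by norm_num) u
  have h2 : ((2:ℝ≥0∞).toReal) = (2:ℝ) := by norm_num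
  rw [h2] at h
  calc ‖u‖ ^ 2 = ‖u‖ ^ (2:ℝ) := by rw [← Real.rpow_natCast]; norm_num
    _ = ∑' n, ‖u n‖ ^ (2:ℝ) := h
    _ = ∑' n, ‖u n‖ ^ 2 := by
        refine tsum_congr fun n => ?_
        rw [← Real.rpow_natCast]; norm_num

lemma summable_norm_sq (u : H2) : Summable (fun n => ‖u n‖ ^ 2) := by
  have := lp.memℓp u
  rw [memℓp_gen_iff (by norm_num : (0:ℝ) < (2:ℝ≥0∞).toReal)] at this
  have h2 : ((2:ℝ≥0∞).toReal) = (2:ℝ) := by norm_num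
  rw [h2] at this
  refine this.congr fun n => ?_
  rw [← Real.rpow_natCast]; norm_num

lemma norm_sq_split (u : H2) : ‖u‖ ^ 2 = ‖u 0‖ ^ 2 + ∑' n, ‖u (n+1)‖ ^ 2 := by
  rw [norm_sq_tsum, Summable.tsum_eq_zero_add (summable_norm_sq u)]

lemma norm_shiftL (g : H2) : ‖shiftL g‖ = ‖g‖ := by
  have h : ‖shiftL g‖ ^ 2 = ‖g‖ ^ 2 := by
    rw [norm_sq_split (shiftL g), norm_sq_tsum g]
    have h0 : (shiftL g) 0 = 0 := rfl
    have h1 : ∀ n, (shiftL g) (n+1) = g n := fun n => rfl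
    simp [h0, h1]
  calc ‖shiftL g‖ = Real.sqrt (‖shiftL g‖ ^ 2) := (Real.sqrt_sq (norm_nonneg _)).symm
    _ = Real.sqrt (‖g‖ ^ 2) := by rw [h]
    _ = ‖g‖ := Real.sqrt_sq (norm_nonneg _)

def shift : H2 →L[ℂ] H2 := shiftL.mkContinuous 1 (fun g => by rw [norm_shiftL, one_mul])

lemma shift_apply_zero (g : H2) : (shift g) 0 = 0 := rfl
lemma shift_apply_succ (g : H2) (n : ℕ) : (shift g) (n+1) = g n := rfl
lemma norm_shift (g : H2) : ‖shift g‖ = ‖g‖ := norm_shiftL g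

lemma eval_shift (f : H2) {z : ℂ} (hz : ‖z‖ < 1) :
    H2eval (shift f) z = z * H2eval f z := by
  unfold H2eval
  rw [Summable.tsum_eq_zero_add (summable_eval (shift f) hz)]
  simp only [shift_apply_zero, shift_apply_succ, zero_mul, zero_add]
  calc ∑' n : ℕ, f n * z ^ (n + 1) = ∑' n : ℕ, z * (f n * z ^ n) := by
        refine tsum_congr fun n => ?_; ring
    _ = z * ∑' n : ℕ, f n * z ^ n := tsum_mul_left

lemma eval_single_one (z : ℂ) : H2eval (lp.single 2 0 (1:ℂ)) z = 1 := by
  unfold H2eval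
  rw [tsum_eq_single 0]
  · rw [lp.single_apply_self (E := fun _ : ℕ => ℂ)]; simp
  · intro n hn
    rw [lp.single_apply_ne (E := fun _ : ℕ => ℂ) 2 0 (1:ℂ) hn, zero_mul]

lemma sstar_eq_adjoint_shift (Sstar : H2 →L[ℂ] H2)
    (hSstar : ∀ (f : H2) (n : ℕ), Sstar f n = f (n + 1)) :
    Sstar = ContinuousLinearMap.adjoint shift := by
  rw [ContinuousLinearMap.eq_adjoint_iff]
  intro x y
  rw [lp.inner_eq_tsum, lp.inner_eq_tsum, Summable.tsum_eq_zero_add (f := fun i => ⟪x i, (shift y) i⟫_ℂ) (lp.summable_inner x (shift y))]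
  simp only [shift_apply_zero, shift_apply_succ, hSstar, inner_zero_right, zero_add]

lemma douglas (D : H2 →L[ℂ] H2) (hD : IsSelfAdjoint D) (f : H2)
    (key : ∀ g : H2, ‖(⟪f, g⟫_ℂ)‖ ≤ ‖D g‖) : f ∈ Set.range D := by
  classical
  set p : Submodule ℂ H2 := LinearMap.range (D : H2 →ₗ[ℂ] H2) with hp
  have wd : ∀ g g' : H2, D g = D g' → ⟪f, g⟫_ℂ = ⟪f, g'⟫_ℂ := by
    intro g g' hgg
    have h1 := key (g - g')
    rw [map_sub, hgg, sub_self, norm_zero] at h1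
    have h0 : ⟪f, g - g'⟫_ℂ = 0 := norm_le_zero_iff.mp h1
    rw [inner_sub_right, sub_eq_zero] at h0
    exact h0
  have hmem : ∀ x : p, ∃ g : H2, D g = (x : H2) := fun x => LinearMap.mem_range.mp x.2
  set pick : p → H2 := fun x => (hmem x).choose with hpickdef
  have hpick : ∀ x : p, D (pick x) = (x : H2) := fun x => (hmem x).choose_spec
  set φL : p →ₗ[ℂ] ℂ :=
    { toFun := fun x => ⟪f, pick x⟫_ℂ
      map_add' := by
        intro x y
        show ⟪f, pick (x + y)⟫_ℂ = ⟪f, pick x⟫_ℂ + ⟪f, pick y⟫_ℂ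
        rw [wd (pick (x + y)) (pick x + pick y) (by rw [map_add, hpick, hpick, hpick]; rfl),
          inner_add_right]
      map_smul' := by
        intro c x
        show ⟪f, pick (c • x)⟫_ℂ = (RingHom.id ℂ) c • ⟪f, pick x⟫_ℂ
        rw [wd (pick (c • x)) (c • pick x) (by rw [map_smul, hpick, hpick]; rfl),
          inner_smul_right]
        rfl } with hφL
  have hbound : ∀ x : p, ‖φL x‖ ≤ 1 * ‖x‖ := by
    intro x
    rw [one_mul]
    calc ‖φL x‖ = ‖(⟪f, pick x⟫_ℂ)‖ := rfl
      _ ≤ ‖D (pick x)‖ := key _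
      _ = ‖x‖ := by rw [hpick]; rfl
  set φ : p →L[ℂ] ℂ := φL.mkContinuous 1 hbound with hφ
  obtain ⟨ψ, hext, -⟩ := exists_extension_norm_eq p φ
  set h : H2 := (InnerProductSpace.toDual ℂ H2).symm ψ with hh
  have hhx : ∀ x : H2, ⟪h, x⟫_ℂ = ψ x := fun x => InnerProductSpace.toDual_symm_apply
  refine ⟨h, ?_⟩
  have hall : ∀ g : H2, ⟪D h - f, g⟫_ℂ = 0 := by
    intro g
    have step1 : ⟪f, g⟫_ℂ = φ (⟨D g, LinearMap.mem_range.mpr ⟨g, rfl⟩⟩ : p) := by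
      have h2 : φ (⟨D g, LinearMap.mem_range.mpr ⟨g, rfl⟩⟩ : p)
          = ⟪f, pick ⟨D g, LinearMap.mem_range.mpr ⟨g, rfl⟩⟩⟫_ℂ := rfl
      rw [h2]
      exact wd g _ (by rw [hpick])
    have step2 : ⟪f, g⟫_ℂ = ⟪h, D g⟫_ℂ := by
      rw [step1, hhx (D g)]
      exact (hext _).symm
    have hDhg : ⟪D h, g⟫_ℂ = ⟪h, D g⟫_ℂ := by
      calc ⟪D h, g⟫_ℂ = ⟪(ContinuousLinearMap.adjoint D) h, g⟫_ℂ := by rw [hD.adjoint_eq]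
        _ = ⟪h, D g⟫_ℂ := adjoint_inner_left D g h
    rw [inner_sub_left, hDhg, ← step2, sub_self]
  have := hall (D h - f)
  rw [inner_self_eq_zero] at this
  exact (sub_eq_zero.mp this)

end Stmt14Aux

set_option maxHeartbeats 1000000 in
/-- For `b` in the closed unit ball of `H^∞` with `b` not constantly `1`,
the function `S^*b : z ↦ (b(z) - b(0))/z` belongs to the de Branges–Rovnyak space `ℋ(b)`,
the range of `D_b = (I - T_b T_{b̄})^{1/2}`.  In the coefficient model the backward shift
`S^*` acts by `(S^*f) n = f (n+1)`, and `bseq ∈ H²` is the coefficient sequence of `b`. -/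
theorem stmt14 (b : ℂ → ℂ) (hb : InUnitBallHinf b)
    (hb1 : ¬ ∀ z ∈ Metric.ball (0 : ℂ) 1, b z = 1)
    (Tb : H2 →L[ℂ] H2) (hTb : IsMulOp b Tb)
    (bseq : H2) (hbseq : ∀ z ∈ Metric.ball (0 : ℂ) 1, H2eval bseq z = b z)
    (Sstar : H2 →L[ℂ] H2) (hSstar : ∀ (f : H2) (n : ℕ), Sstar f n = f (n + 1))
    (Db : H2 →L[ℂ] H2) (hDb_pos : Db.IsPositive)
    (hDb_sq : Db ∘L Db = 1 - Tb ∘L adjoint Tb) :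
    Sstar bseq ∈ Set.range Db := by
  classical
  set S : H2 →L[ℂ] H2 := Stmt14Aux.shift with hSdef
  have hSadj : Sstar = adjoint S := Stmt14Aux.sstar_eq_adjoint_shift Sstar hSstar
  have hball : ∀ z ∈ Metric.ball (0:ℂ) 1, ‖z‖ < 1 := by
    intro z hz; simpa [Metric.mem_ball, dist_zero_right] using hz
  -- commutation T_b S = S T_b
  have hcomm : Tb ∘L S = S ∘L Tb := by
    refine ContinuousLinearMap.ext fun f => ?_
    apply Stmt14Aux.eval_injective
    intro z hz
    have hz' := hball z hz
    rw [ContinuousLinearMap.comp_apply, ContinuousLinearMap.comp_apply,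
      hTb _ z hz, Stmt14Aux.eval_shift _ hz', Stmt14Aux.eval_shift _ hz', hTb _ z hz]
    ring
  -- T_b applied to the constant function 1 is b
  have hTbe0 : Tb (lp.single 2 0 (1:ℂ)) = bseq := by
    apply Stmt14Aux.eval_injective
    intro z hz
    rw [hTb _ z hz, Stmt14Aux.eval_single_one, hbseq z hz, mul_one]
  have hDbsa : IsSelfAdjoint Db := hDb_pos.isSelfAdjoint
  -- ‖T_b* x‖² = ‖x‖² - ‖D_b x‖²
  have hTbadj : ∀ x : H2, ‖(adjoint Tb) x‖ ^ 2 = ‖x‖ ^ 2 - ‖Db x‖ ^ 2 := by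
    intro x
    have e1 : ⟪Db x, Db x⟫_ℂ = ⟪x, Db (Db x)⟫_ℂ := by
      calc ⟪Db x, Db x⟫_ℂ = ⟪(adjoint Db) x, Db x⟫_ℂ := by rw [hDbsa.adjoint_eq]
        _ = ⟪x, Db (Db x)⟫_ℂ := adjoint_inner_left Db (Db x) x
    have e2 : Db (Db x) = x - Tb ((adjoint Tb) x) := by
      have := congrArg (fun T : H2 →L[ℂ] H2 => T x) hDb_sq
      simpa [ContinuousLinearMap.sub_apply, ContinuousLinearMap.comp_apply,
        ContinuousLinearMap.one_apply] using this
    have e3 : ⟪x, Tb ((adjoint Tb) x)⟫_ℂ = ⟪(adjoint Tb) x, (adjoint Tb) x⟫_ℂ :=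
      (adjoint_inner_left Tb ((adjoint Tb) x) x).symm
    have e4 : ⟪Db x, Db x⟫_ℂ = ⟪x, x⟫_ℂ - ⟪(adjoint Tb) x, (adjoint Tb) x⟫_ℂ := by
      rw [e1, e2, inner_sub_right, e3]
    have e5 : RCLike.re ⟪Db x, Db x⟫_ℂ
        = RCLike.re ⟪x, x⟫_ℂ - RCLike.re ⟪(adjoint Tb) x, (adjoint Tb) x⟫_ℂ := by
      rw [e4, map_sub]
    rw [inner_self_eq_norm_sq, inner_self_eq_norm_sq, inner_self_eq_norm_sq] at e5
    linarith
  -- ‖u‖² = ‖u 0‖² + ‖S* u‖²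
  have hsplit : ∀ u : H2, ‖u‖ ^ 2 = ‖u 0‖ ^ 2 + ‖Sstar u‖ ^ 2 := by
    intro u
    rw [Stmt14Aux.norm_sq_split u, Stmt14Aux.norm_sq_tsum (Sstar u)]
    congr 1
    exact (tsum_congr fun n => by rw [hSstar]).symm
  have hSstarS : ∀ g : H2, Sstar (S g) = g := by
    intro g
    ext n
    rw [hSstar, Stmt14Aux.shift_apply_succ]
  -- commutation of adjoints
  have hcomm' : Sstar ∘L (adjoint Tb) = (adjoint Tb) ∘L Sstar := by
    have h1 := congrArg ContinuousLinearMap.adjoint hcomm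
    rw [adjoint_comp, adjoint_comp] at h1
    rw [hSadj]
    exact h1
  -- the key inequality
  have key : ∀ g : H2, ‖(⟪Sstar bseq, g⟫_ℂ)‖ ≤ ‖Db g‖ := by
    intro g
    set u : H2 := (adjoint Tb) (S g) with hu
    have hip : ⟪Sstar bseq, g⟫_ℂ = u 0 := by
      calc ⟪Sstar bseq, g⟫_ℂ = ⟪(adjoint S) bseq, g⟫_ℂ := by rw [hSadj]
        _ = ⟪bseq, S g⟫_ℂ := adjoint_inner_left S g bseq
        _ = ⟪Tb (lp.single 2 0 (1:ℂ)), S g⟫_ℂ := by rw [hTbe0]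
        _ = ⟪lp.single 2 0 (1:ℂ), (adjoint Tb) (S g)⟫_ℂ :=
            (adjoint_inner_right Tb (lp.single 2 0 (1:ℂ)) (S g)).symm
        _ = ⟪(1:ℂ), u 0⟫_ℂ := lp.inner_single_left 0 (1:ℂ) u
        _ = u 0 := by simp
    have hSstaru : Sstar u = (adjoint Tb) g := by
      have h1 := congrArg (fun T : H2 →L[ℂ] H2 => T (S g)) hcomm'
      simp only [ContinuousLinearMap.comp_apply] at h1
      rw [hu, h1, hSstarS]
    have hu0 : ‖u 0‖ ^ 2 = ‖Db g‖ ^ 2 - ‖Db (S g)‖ ^ 2 := by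
      have h1 := hsplit u
      have h2 : ‖u‖ ^ 2 = ‖S g‖ ^ 2 - ‖Db (S g)‖ ^ 2 := hTbadj (S g)
      have h3 : ‖Sstar u‖ ^ 2 = ‖g‖ ^ 2 - ‖Db g‖ ^ 2 := by rw [hSstaru]; exact hTbadj g
      have h4 : ‖S g‖ = ‖g‖ := Stmt14Aux.norm_shift g
      rw [h2, h3, h4] at h1
      linarith
    have hle : ‖u 0‖ ^ 2 ≤ ‖Db g‖ ^ 2 := by
      rw [hu0]
      have := sq_nonneg ‖Db (S g)‖
      linarith
    rw [hip]
    calc ‖u 0‖ = Real.sqrt (‖u 0‖ ^ 2) := (Real.sqrt_sq (norm_nonneg _)).symm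
      _ ≤ Real.sqrt (‖Db g‖ ^ 2) := Real.sqrt_le_sqrt hle
      _ = ‖Db g‖ := Real.sqrt_sq (norm_nonneg _)
  exact Stmt14Aux.douglas Db hDbsa (Sstar bseq) key
end
end

section
/- Let b be in the closed unit ball of H^∞, X_b = S^*|_{ℋ(b)}, and λ ∈ 𝔻. Then (I - λ X_b)^{-1}(S^*b) is the function z ↦ (b(z) - b(λ))/(z - λ); in particular all these difference quotients belong to ℋ(b). -/
noncomputable section

open ContinuousLinearMap

lemma h2_summable (f : H2) {z : ℂ} (hz : ‖z‖ < 1) :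
    Summable fun n : ℕ => f n * z ^ n := by
  refine Summable.of_norm ?_
  have hg : Summable fun n : ℕ => ‖f‖ * ‖z‖ ^ n :=
    (summable_geometric_of_lt_one (norm_nonneg z) hz).mul_left _
  refine hg.of_nonneg_of_le (fun n => norm_nonneg _) fun n => ?_
  rw [norm_mul, norm_pow]
  exact mul_le_mul_of_nonneg_right (lp.norm_apply_le_norm (by norm_num) f n) (by positivity)

lemma h2eval_sub (f g : H2) {z : ℂ} (hz : ‖z‖ < 1) :
    H2eval (f - g) z = H2eval f z - H2eval g z := by
  unfold H2eval
  rw [← Summable.tsum_sub (h2_summable f hz) (h2_summable g hz)]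
  exact tsum_congr fun n => by rw [lp.coeFn_sub, Pi.sub_apply, sub_mul]

lemma h2eval_add (f g : H2) {z : ℂ} (hz : ‖z‖ < 1) :
    H2eval (f + g) z = H2eval f z + H2eval g z := by
  unfold H2eval
  rw [← Summable.tsum_add (h2_summable f hz) (h2_summable g hz)]
  exact tsum_congr fun n => by rw [lp.coeFn_add, Pi.add_apply, add_mul]

lemma h2eval_smul (c : ℂ) (f : H2) {z : ℂ} (hz : ‖z‖ < 1) :
    H2eval (c • f) z = c * H2eval f z := by
  unfold H2eval
  rw [← tsum_mul_left]
  exact tsum_congr fun n => by rw [lp.coeFn_smul, Pi.smul_apply, smul_eq_mul, mul_assoc]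

lemma h2eval_at_zero (f : H2) : H2eval f 0 = f 0 := by
  unfold H2eval
  rw [tsum_eq_single 0 (fun n hn => by simp [zero_pow hn])]
  simp

lemma h2eval_succ (f g : H2) (hg : ∀ n, g n = f (n + 1)) {z : ℂ} (hz : ‖z‖ < 1) :
    H2eval f z = f 0 + z * H2eval g z := by
  have hs := h2_summable f hz
  rw [H2eval, Summable.tsum_eq_zero_add hs, pow_zero, mul_one]
  congr 1
  rw [H2eval, ← tsum_mul_left]
  exact tsum_congr fun n => by rw [hg]; ring

lemma h2eval_sub_head (f : H2) {z : ℂ} (hz : ‖z‖ < 1) :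
    ‖H2eval f z - f 0‖ ≤ ‖f‖ * ‖z‖ * (1 - ‖z‖)⁻¹ := by
  have hs := h2_summable f hz
  have h1 : H2eval f z - f 0 = ∑' n : ℕ, f (n + 1) * z ^ (n + 1) := by
    rw [H2eval, Summable.tsum_eq_zero_add hs, pow_zero, mul_one]; ring
  have hterm : ∀ n : ℕ, ‖f (n + 1) * z ^ (n + 1)‖ ≤ ‖f‖ * ‖z‖ * ‖z‖ ^ n := by
    intro n
    rw [norm_mul, norm_pow, pow_succ, mul_comm (‖z‖ ^ n), ← mul_assoc]
    exact mul_le_mul_of_nonneg_right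
      (mul_le_mul_of_nonneg_right (lp.norm_apply_le_norm (by norm_num) f (n + 1))
        (norm_nonneg z)) (by positivity)
  have hgs : Summable fun n : ℕ => ‖f‖ * ‖z‖ * ‖z‖ ^ n :=
    (summable_geometric_of_lt_one (norm_nonneg z) hz).mul_left _
  have hns : Summable fun n : ℕ => ‖f (n + 1) * z ^ (n + 1)‖ :=
    hgs.of_nonneg_of_le (fun n => norm_nonneg _) hterm
  calc ‖H2eval f z - f 0‖ ≤ ∑' n : ℕ, ‖f (n + 1) * z ^ (n + 1)‖ := by
        rw [h1]; exact norm_tsum_le_tsum_norm hns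
    _ ≤ ∑' n : ℕ, ‖f‖ * ‖z‖ * ‖z‖ ^ n := Summable.tsum_le_tsum hterm hns hgs
    _ = ‖f‖ * ‖z‖ * (1 - ‖z‖)⁻¹ := by
        rw [tsum_mul_left, tsum_geometric_of_lt_one (norm_nonneg z) hz]


lemma coeff_zero (f : H2) (h : ∀ z : ℂ, ‖z‖ < 1 → z ≠ 0 → H2eval f z = 0) : f 0 = 0 := by
  by_contra h0
  have hf0 : 0 < ‖f 0‖ := by simpa [norm_pos_iff] using h0
  set t : ℝ := min (1/2) (‖f 0‖ / (4 * ‖f‖ + 1)) with ht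
  have ht0 : 0 < t := lt_min (by norm_num) (by positivity)
  have ht2 : t ≤ 1/2 := min_le_left _ _
  set z : ℂ := (t : ℂ) with hzdef
  have hzn : ‖z‖ = t := by
    rw [hzdef, Complex.norm_real, Real.norm_eq_abs, abs_of_pos ht0]
  have hz1 : ‖z‖ < 1 := by rw [hzn]; linarith
  have hz0 : z ≠ 0 := by
    simp only [hzdef, ne_eq, Complex.ofReal_eq_zero]; exact ne_of_gt ht0
  have hb := h2eval_sub_head f hz1
  rw [h z hz1 hz0, zero_sub, norm_neg, hzn] at hb
  have hinv : (1 - t)⁻¹ ≤ 2 := by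
    rw [inv_le_comm₀ (by linarith) (by norm_num)]
    linarith
  have hb2 : ‖f 0‖ ≤ ‖f‖ * t * 2 := by
    calc ‖f 0‖ ≤ ‖f‖ * t * (1 - t)⁻¹ := hb
      _ ≤ ‖f‖ * t * 2 := by
          refine mul_le_mul_of_nonneg_left hinv (by positivity)
  have htle : t ≤ ‖f 0‖ / (4 * ‖f‖ + 1) := min_le_right _ _
  have : ‖f‖ * t * 2 < ‖f 0‖ := by
    have h1 : ‖f‖ * t * 2 ≤ ‖f‖ * (‖f 0‖ / (4 * ‖f‖ + 1)) * 2 := by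
      have := mul_le_mul_of_nonneg_left htle (norm_nonneg f)
      nlinarith
    have h2 : ‖f‖ * (‖f 0‖ / (4 * ‖f‖ + 1)) * 2 < ‖f 0‖ := by
      rw [div_eq_mul_inv]
      have hpos : (0:ℝ) < 4 * ‖f‖ + 1 := by positivity
      rw [show ‖f‖ * (‖f 0‖ * (4 * ‖f‖ + 1)⁻¹) * 2 = (2 * ‖f‖) * ((4 * ‖f‖ + 1)⁻¹) * ‖f 0‖ by ring]
      have : (2 * ‖f‖) * (4 * ‖f‖ + 1)⁻¹ < 1 := by
        rw [mul_inv_lt_iff₀ hpos]; linarith [norm_nonneg f]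
      nlinarith
    linarith
  linarith

lemma eval_ext (Sstar : H2 →L[ℂ] H2) (hSstar : ∀ (f : H2) (n : ℕ), Sstar f n = f (n + 1))
    (f : H2) (h : ∀ z : ℂ, ‖z‖ < 1 → z ≠ 0 → H2eval f z = 0) : f = 0 := by
  have key : ∀ (n : ℕ) (f : H2), (∀ z : ℂ, ‖z‖ < 1 → z ≠ 0 → H2eval f z = 0) → f n = 0 := by
    intro n
    induction n with
    | zero => exact fun f hf => coeff_zero f hf
    | succ n ih =>
      intro f hf
      have h0 := coeff_zero f hf
      have hf' : ∀ z : ℂ, ‖z‖ < 1 → z ≠ 0 → H2eval (Sstar f) z = 0 := by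
        intro z hz hz0
        have heq := h2eval_succ f (Sstar f) (fun n => hSstar f n) hz
        rw [hf z hz hz0, h0, zero_add] at heq
        exact (mul_eq_zero.mp heq.symm).resolve_left hz0
      have := ih (Sstar f) hf'
      rwa [hSstar f n] at this
  apply lp.ext
  funext n
  rw [lp.coeFn_zero, Pi.zero_apply]
  exact key n f h


lemma mem_range_of_bound (D : H2 →L[ℂ] H2) (hD : ContinuousLinearMap.adjoint D = D)
    (h : H2) (c : ℝ)
    (hb : ∀ x : H2, ‖(inner ℂ h x : ℂ)‖ ≤ c * ‖D x‖) : h ∈ Set.range D := by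
  classical
  set Dl : H2 →ₗ[ℂ] H2 := (D : H2 →ₗ[ℂ] H2) with hDl
  set φ : H2 →ₗ[ℂ] ℂ := ((innerSL ℂ h : H2 →L[ℂ] ℂ) : H2 →ₗ[ℂ] ℂ) with hφ
  have hφ_app : ∀ x : H2, φ x = inner ℂ h x := fun x => rfl
  have hle : LinearMap.ker Dl ≤ LinearMap.ker φ := by
    intro x hx
    have hx' : D x = 0 := hx
    have := hb x
    rw [hx', norm_zero, mul_zero] at this
    have : (inner ℂ h x : ℂ) = 0 := norm_le_zero_iff.mp this
    simpa [LinearMap.mem_ker, hφ_app] using this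
  set q : (H2 ⧸ LinearMap.ker Dl) →ₗ[ℂ] ℂ := Submodule.liftQ (LinearMap.ker Dl) φ hle with hq
  set ψ : LinearMap.range Dl →ₗ[ℂ] ℂ := q ∘ₗ (Dl.quotKerEquivRange).symm.toLinearMap with hψdef
  have hψ : ∀ x : H2, ψ ⟨Dl x, LinearMap.mem_range_self Dl x⟩ = inner ℂ h x := by
    intro x
    show q (Dl.quotKerEquivRange.symm ⟨Dl x, _⟩) = _
    rw [LinearMap.quotKerEquivRange_symm_apply_image, Submodule.mkQ_apply, Submodule.liftQ_apply]
    exact hφ_app x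
  have hbound : ∀ u : LinearMap.range Dl, ‖ψ u‖ ≤ c * ‖(u : H2)‖ := by
    rintro ⟨u, x, rfl⟩
    calc ‖ψ ⟨Dl x, LinearMap.mem_range_self Dl x⟩‖ = ‖(inner ℂ h x : ℂ)‖ := by rw [hψ x]
      _ ≤ c * ‖D x‖ := hb x
  set ψc : LinearMap.range Dl →L[ℂ] ℂ := LinearMap.mkContinuous ψ c hbound with hψc
  obtain ⟨F, hF, -⟩ := exists_extension_norm_eq (𝕜 := ℂ) (LinearMap.range Dl) ψc
  set y := (InnerProductSpace.toDual ℂ H2).symm F with hy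
  refine ⟨y, ?_⟩
  refine ext_inner_right ℂ ?_
  intro v
  have h1 : (inner ℂ y (D v) : ℂ) = inner ℂ h v := by
    have h2 : F (D v) = inner ℂ h v := by
      have h3 := hF ⟨D v, LinearMap.mem_range_self Dl v⟩
      calc F (D v) = ψc ⟨Dl v, LinearMap.mem_range_self Dl v⟩ := h3
        _ = ψ ⟨Dl v, LinearMap.mem_range_self Dl v⟩ := rfl
        _ = inner ℂ h v := hψ v
    rw [← h2, hy, InnerProductSpace.toDual_symm_apply]
  calc (inner ℂ (D y) v : ℂ) = inner ℂ y (D v) := by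
        conv_lhs => rw [← hD]
        exact ContinuousLinearMap.adjoint_inner_left D v y
    _ = inner ℂ h v := h1


def e0 : H2 := lp.single 2 0 1

lemma inner_single (m : ℕ) (f : H2) : (inner ℂ (lp.single 2 m (1:ℂ)) f : ℂ) = f m := by
  rw [lp.inner_single_left]; simp [RCLike.inner_apply]

lemma inner_e0 (f : H2) : (inner ℂ e0 f : ℂ) = f 0 := inner_single 0 f

lemma norm_e0 : ‖e0‖ = 1 := by
  have := lp.norm_single (p := 2) (E := fun _ : ℕ => ℂ) (by norm_num) 0 (1:ℂ)
  simpa [e0] using this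

variable (Sstar : H2 →L[ℂ] H2) (hSstar : ∀ (f : H2) (n : ℕ), Sstar f n = f (n + 1))

section
include hSstar

lemma hS_single0 : Sstar (lp.single 2 0 (1:ℂ)) = 0 := by
  apply lp.ext; funext n
  rw [lp.coeFn_zero, Pi.zero_apply, hSstar]
  exact lp.single_apply_ne 2 0 1 (by simp)

lemma hS_single (n : ℕ) : Sstar (lp.single 2 (n+1) (1:ℂ)) = lp.single 2 n 1 := by
  apply lp.ext; funext m
  rw [hSstar]
  by_cases h : m = n
  · subst h
    rw [lp.single_apply_self, lp.single_apply_self]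
  · rw [lp.single_apply_ne 2 _ _ (by omega : m + 1 ≠ n + 1), lp.single_apply_ne 2 _ _ h]

lemma hSw0 (w : H2) : (ContinuousLinearMap.adjoint Sstar w) 0 = 0 := by
  rw [← inner_single 0, adjoint_inner_right, hS_single0 Sstar hSstar, inner_zero_left]

lemma hSwsucc (w : H2) (m : ℕ) : (ContinuousLinearMap.adjoint Sstar w) (m+1) = w m := by
  rw [← inner_single (m+1), adjoint_inner_right, hS_single Sstar hSstar m, inner_single]

lemma hSstarS (w : H2) : Sstar (ContinuousLinearMap.adjoint Sstar w) = w := by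
  apply lp.ext; funext n
  rw [hSstar, hSwsucc Sstar hSstar]

lemma hSnorm (w : H2) : ‖ContinuousLinearMap.adjoint Sstar w‖ = ‖w‖ := by
  set S := ContinuousLinearMap.adjoint Sstar
  have h1 : (inner ℂ (S w) (S w) : ℂ) = inner ℂ w w := by
    calc (inner ℂ (S w) (S w) : ℂ) = inner ℂ w (Sstar (S w)) :=
          ContinuousLinearMap.adjoint_inner_left Sstar (S w) w
      _ = inner ℂ w w := by rw [hSstarS Sstar hSstar]
  have h2 : ‖S w‖ ^ 2 = ‖w‖ ^ 2 := by
    rw [norm_sq_eq_re_inner (𝕜 := ℂ), norm_sq_eq_re_inner (𝕜 := ℂ), h1]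
  calc ‖S w‖ = √(‖S w‖ ^ 2) := (Real.sqrt_sq (norm_nonneg _)).symm
    _ = √(‖w‖ ^ 2) := by rw [h2]
    _ = ‖w‖ := Real.sqrt_sq (norm_nonneg _)

lemma hSe0 (w : H2) : (inner ℂ (ContinuousLinearMap.adjoint Sstar w) e0 : ℂ) = 0 := by
  rw [← inner_conj_symm, inner_e0, hSw0 Sstar hSstar, map_zero]

lemma hdecomp (w : H2) (c : ℂ) :
    ‖ContinuousLinearMap.adjoint Sstar w + c • e0‖ ^ 2 = ‖w‖ ^ 2 + ‖c‖ ^ 2 := by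
  rw [norm_add_sq (𝕜 := ℂ), inner_smul_right, hSe0 Sstar hSstar, mul_zero, map_zero,
    norm_smul, hSnorm Sstar hSstar, norm_e0, mul_one]
  ring

lemma hfdecomp (f : H2) :
    f = ContinuousLinearMap.adjoint Sstar (Sstar f) + (f 0 : ℂ) • e0 := by
  apply lp.ext; funext n
  rw [lp.coeFn_add, Pi.add_apply, lp.coeFn_smul, Pi.smul_apply, smul_eq_mul]
  cases n with
  | zero =>
    rw [hSw0 Sstar hSstar, zero_add]
    simp [e0, lp.single_apply]
  | succ m =>
    rw [hSwsucc Sstar hSstar, hSstar]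
    have : (e0 : ∀ n : ℕ, ℂ) (m+1) = 0 := lp.single_apply_ne 2 0 1 (by simp)
    rw [this, mul_zero, add_zero]

lemma hSstar_contr (f : H2) : ‖Sstar f‖ ≤ ‖f‖ := by
  have h1 := hdecomp Sstar hSstar (Sstar f) (f 0)
  rw [← hfdecomp Sstar hSstar f] at h1
  nlinarith [norm_nonneg (Sstar f), norm_nonneg f, sq_nonneg (‖f 0‖)]

end


set_option maxHeartbeats 1000000

/-- Let `b` be in the closed unit ball of `H^∞`, `X_b = S^*|_{ℋ(b)}`, and
`λ ∈ 𝔻`.  Then `(I - λ X_b)^{-1}(S^*b)` is the function `z ↦ (b(z) - b(λ))/(z - λ)`; in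
particular these difference quotients belong to `ℋ(b)` (the range of
`D_b = (I - T_b T_{b̄})^{1/2}`).  This is expressed by: there is `g ∈ ℋ(b)` representing the
difference quotient with `(I - λ S^*) g = S^* b`. -/
theorem stmt15 (b : ℂ → ℂ) (hb : InUnitBallHinf b)
    (Tb : H2 →L[ℂ] H2) (hTb : IsMulOp b Tb)
    (bseq : H2) (hbseq : ∀ z ∈ Metric.ball (0 : ℂ) 1, H2eval bseq z = b z)
    (Sstar : H2 →L[ℂ] H2) (hSstar : ∀ (f : H2) (n : ℕ), Sstar f n = f (n + 1))
    (Db : H2 →L[ℂ] H2) (hDb_pos : Db.IsPositive)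
    (hDb_sq : Db ∘L Db = 1 - Tb ∘L adjoint Tb)
    (lam : ℂ) (hlam : lam ∈ Metric.ball (0 : ℂ) 1) :
    ∃ g : H2,
      (∀ z ∈ Metric.ball (0 : ℂ) 1, z ≠ lam →
        H2eval g z = (b z - b lam) / (z - lam)) ∧
      g - lam • Sstar g = Sstar bseq ∧
      g ∈ Set.range Db := by
  have hlam' : ‖lam‖ < 1 := mem_ball_zero_iff.mp hlam
  have hadj : ContinuousLinearMap.adjoint (ContinuousLinearMap.adjoint Sstar) = Sstar :=
    adjoint_adjoint Sstar
  set e : H2 := Sstar bseq with he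
  -- the geometric series inverse
  set t : H2 →L[ℂ] H2 := lam • Sstar with htdef
  have hSop : ‖t‖ < 1 := by
    have h1 : ‖Sstar‖ ≤ 1 :=
      opNorm_le_bound _ zero_le_one fun f => by
        rw [one_mul]; exact hSstar_contr Sstar hSstar f
    calc ‖t‖ = ‖lam‖ * ‖Sstar‖ := norm_smul lam Sstar
      _ ≤ ‖lam‖ * 1 := mul_le_mul_of_nonneg_left h1 (norm_nonneg lam)
      _ < 1 := by rwa [mul_one]
  set A : H2 →L[ℂ] H2 := ∑' n : ℕ, t ^ n with hA
  have hAinv : (1 - t) * A = 1 := mul_neg_geom_series t hSop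
  set g : H2 := A e with hgdef
  have cond2 : g - lam • Sstar g = e := by
    have h1 : ((1 - t) * A) e = (1 : H2 →L[ℂ] H2) e := by rw [hAinv]
    rw [ContinuousLinearMap.mul_apply, ContinuousLinearMap.one_apply, ContinuousLinearMap.sub_apply, ContinuousLinearMap.one_apply, htdef, ContinuousLinearMap.smul_apply] at h1
    exact h1
  -- basic evaluation facts
  have h0ball : (0:ℂ) ∈ Metric.ball (0:ℂ) 1 := Metric.mem_ball_self one_pos
  have hb0 : bseq 0 = b 0 := by rw [← h2eval_at_zero bseq]; exact hbseq 0 h0ball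
  have hTb0 : ∀ f : H2, (Tb f) 0 = b 0 * f 0 := by
    intro f
    have h1 := hTb f 0 h0ball
    rwa [h2eval_at_zero, h2eval_at_zero] at h1
  have hq : ∀ (u : H2) (z : ℂ), ‖z‖ < 1 → z * H2eval (Sstar u) z = H2eval u z - u 0 := by
    intro u z hz
    rw [h2eval_succ u (Sstar u) (fun n => hSstar u n) hz]; ring
  -- the commutation relation S* T_b = T_b S* + (S* b) ⊗ e0
  have hI1 : ∀ f : H2, Sstar (Tb f) = Tb (Sstar f) + (f 0 : ℂ) • e := by
    intro f
    have hzero : ∀ z : ℂ, ‖z‖ < 1 → z ≠ 0 →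
        H2eval (Sstar (Tb f) - (Tb (Sstar f) + (f 0 : ℂ) • e)) z = 0 := by
      intro z hz hz0
      have hzb : z ∈ Metric.ball (0:ℂ) 1 := mem_ball_zero_iff.mpr hz
      rw [h2eval_sub _ _ hz, h2eval_add _ _ hz, h2eval_smul _ _ hz]
      have e1 := hq (Tb f) z hz
      have e2 : H2eval (Tb (Sstar f)) z = b z * H2eval (Sstar f) z := hTb _ z hzb
      have e3 := hq f z hz
      have e4 := hq bseq z hz
      have e5 : H2eval (Tb f) z = b z * H2eval f z := hTb f z hzb
      have e6 : H2eval bseq z = b z := hbseq z hzb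
      have e7 := hTb0 f
      have hmul : z * (H2eval (Sstar (Tb f)) z -
          (H2eval (Tb (Sstar f)) z + f 0 * H2eval e z)) = 0 := by
        rw [he]
        linear_combination e1 + e5 - e7 - z * e2 - b z * e3 - f 0 * e4 - f 0 * e6
          + f 0 * hb0
      exact (mul_eq_zero.mp hmul).resolve_left hz0
    exact sub_eq_zero.mp (eval_ext Sstar hSstar _ hzero)
  -- adjoint commutation
  have he0r : ∀ f : H2, (inner ℂ f e0 : ℂ) = starRingEnd ℂ (f 0) := by
    intro f; rw [← inner_conj_symm, inner_e0]
  have hTbS : ∀ x : H2, adjoint Tb (adjoint Sstar x)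
      = adjoint Sstar (adjoint Tb x) + (inner ℂ e x : ℂ) • e0 := by
    intro x
    refine ext_inner_left ℂ ?_
    intro f
    calc (inner ℂ f (adjoint Tb (adjoint Sstar x)) : ℂ)
        = inner ℂ (Tb f) (adjoint Sstar x) := adjoint_inner_right Tb f (adjoint Sstar x)
      _ = inner ℂ (Sstar (Tb f)) x := adjoint_inner_right Sstar (Tb f) x
      _ = inner ℂ (Tb (Sstar f) + (f 0 : ℂ) • e) x := by rw [hI1 f]
      _ = inner ℂ (Tb (Sstar f)) x + starRingEnd ℂ (f 0) * inner ℂ e x := by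
          rw [inner_add_left, inner_smul_left]
      _ = inner ℂ (Sstar f) (adjoint Tb x) + starRingEnd ℂ (f 0) * inner ℂ e x := by
          rw [← adjoint_inner_right Tb (Sstar f) x]
      _ = inner ℂ f (adjoint Sstar (adjoint Tb x)) + starRingEnd ℂ (f 0) * inner ℂ e x := by
          conv_lhs => rw [← hadj]
          rw [adjoint_inner_left]
      _ = inner ℂ f (adjoint Sstar (adjoint Tb x) + (inner ℂ e x : ℂ) • e0) := by
          rw [inner_add_right, inner_smul_right, he0r]; ring
  -- norm identity for Db
  have hDbsa : ContinuousLinearMap.adjoint Db = Db := isSelfAdjoint_iff'.mp hDb_pos.isSelfAdjoint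
  have hDb_norm : ∀ x : H2, ‖Db x‖^2 = ‖x‖^2 - ‖adjoint Tb x‖^2 := by
    intro x
    have h1 : (inner ℂ (Db x) (Db x) : ℂ) = inner ℂ x x - inner ℂ x (Tb (adjoint Tb x)) := by
      calc (inner ℂ (Db x) (Db x) : ℂ) = inner ℂ x (Db (Db x)) := by
            rw [← adjoint_inner_left Db (Db x) x, hDbsa]
        _ = inner ℂ x ((Db ∘L Db) x) := rfl
        _ = inner ℂ x x - inner ℂ x (Tb (adjoint Tb x)) := by
            rw [hDb_sq, ContinuousLinearMap.sub_apply, ContinuousLinearMap.one_apply, inner_sub_right]; rfl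
    have h2 : RCLike.re (inner ℂ x (Tb (adjoint Tb x)) : ℂ) = ‖adjoint Tb x‖^2 := by
      rw [← adjoint_inner_left Tb (adjoint Tb x) x]
      exact (norm_sq_eq_re_inner (𝕜 := ℂ) _).symm
    calc ‖Db x‖^2 = RCLike.re (inner ℂ (Db x) (Db x) : ℂ) := norm_sq_eq_re_inner (𝕜 := ℂ) _
      _ = RCLike.re ((inner ℂ x x : ℂ) - inner ℂ x (Tb (adjoint Tb x))) := by rw [h1]
      _ = ‖x‖^2 - ‖adjoint Tb x‖^2 := by
          rw [map_sub, h2, ← norm_sq_eq_re_inner (𝕜 := ℂ)]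
  -- contraction of Db along the forward shift
  have hDbS : ∀ x : H2, ‖Db (adjoint Sstar x)‖^2 = ‖Db x‖^2 - ‖(inner ℂ e x : ℂ)‖^2 := by
    intro x
    rw [hDb_norm (adjoint Sstar x), hDb_norm x, hTbS x, hSnorm Sstar hSstar x,
      hdecomp Sstar hSstar (adjoint Tb x) (inner ℂ e x)]
    ring
  have hkey1 : ∀ x : H2, ‖(inner ℂ e x : ℂ)‖ ≤ ‖Db x‖ := by
    intro x
    nlinarith [hDbS x, sq_nonneg ‖Db (adjoint Sstar x)‖, norm_nonneg (Db x),
      norm_nonneg (inner ℂ e x : ℂ), norm_nonneg (Db (adjoint Sstar x))]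
  have hkey2 : ∀ x : H2, ‖Db (adjoint Sstar x)‖ ≤ ‖Db x‖ := by
    intro x
    nlinarith [hDbS x, norm_nonneg (Db x), norm_nonneg (Db (adjoint Sstar x)),
      sq_nonneg ‖(inner ℂ e x : ℂ)‖]
  have hkey3 : ∀ (k : ℕ) (x : H2), ‖Db (((adjoint Sstar)^k) x)‖ ≤ ‖Db x‖ := by
    intro k
    induction k with
    | zero => intro x; simp
    | succ k ih =>
      intro x
      rw [pow_succ, ContinuousLinearMap.mul_apply]
      exact (ih (adjoint Sstar x)).trans (hkey2 x)
  have hkey4 : ∀ (k : ℕ) (x : H2), ‖(inner ℂ e (((adjoint Sstar)^k) x) : ℂ)‖ ≤ ‖Db x‖ :=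
    fun k x => (hkey1 _).trans (hkey3 k x)
  -- pairing of g with arbitrary x
  have hpair : ∀ (k : ℕ) (x : H2),
      (inner ℂ ((Sstar^k) e) x : ℂ) = inner ℂ e (((adjoint Sstar)^k) x) := by
    intro k
    induction k with
    | zero => intro x; simp
    | succ k ih =>
      intro x
      rw [pow_succ', ContinuousLinearMap.mul_apply]
      calc (inner ℂ (Sstar ((Sstar^k) e)) x : ℂ)
          = inner ℂ ((Sstar^k) e) (adjoint Sstar x) :=
            (adjoint_inner_right Sstar ((Sstar^k) e) x).symm
        _ = inner ℂ e (((adjoint Sstar)^k) (adjoint Sstar x)) := ih (adjoint Sstar x)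
        _ = inner ℂ e (((adjoint Sstar)^(k+1)) x) := by rw [pow_succ, ContinuousLinearMap.mul_apply]
  have hgx : ∀ x : H2, ‖(inner ℂ x g : ℂ)‖ ≤ (1 - ‖lam‖)⁻¹ * ‖Db x‖ := by
    intro x
    have hs0 : HasSum (fun n : ℕ => t ^ n) A := (summable_geometric_of_norm_lt_one hSop).hasSum
    have hs1 : HasSum (fun n : ℕ => (t ^ n) e) g :=
      (ContinuousLinearMap.apply ℂ H2 e).hasSum hs0
    have hs2 : HasSum (fun n : ℕ => (inner ℂ x ((t ^ n) e) : ℂ)) (inner ℂ x g) :=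
      (innerSL ℂ x).hasSum hs1
    have hterm : ∀ n : ℕ, ‖(inner ℂ x ((t ^ n) e) : ℂ)‖ ≤ ‖lam‖^n * ‖Db x‖ := by
      intro n
      have htn : (t ^ n) e = lam ^ n • ((Sstar ^ n) e) := by
        rw [htdef, smul_pow, smul_apply]
      rw [htn, inner_smul_right, norm_mul, norm_pow]
      refine mul_le_mul_of_nonneg_left ?_ (by positivity)
      rw [← inner_conj_symm, RCLike.norm_conj, hpair n x]
      exact hkey4 n x
    have hgs : Summable fun n : ℕ => ‖lam‖^n * ‖Db x‖ :=
      (summable_geometric_of_lt_one (norm_nonneg lam) hlam').mul_right _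
    have hns : Summable fun n : ℕ => ‖(inner ℂ x ((t ^ n) e) : ℂ)‖ :=
      hgs.of_nonneg_of_le (fun n => norm_nonneg _) hterm
    calc ‖(inner ℂ x g : ℂ)‖ ≤ ∑' n : ℕ, ‖(inner ℂ x ((t ^ n) e) : ℂ)‖ := by
          rw [← hs2.tsum_eq]; exact norm_tsum_le_tsum_norm hns
      _ ≤ ∑' n : ℕ, ‖lam‖^n * ‖Db x‖ := Summable.tsum_le_tsum hterm hns hgs
      _ = (1 - ‖lam‖)⁻¹ * ‖Db x‖ := by
          rw [tsum_mul_right, tsum_geometric_of_lt_one (norm_nonneg lam) hlam']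
  have hmem : g ∈ Set.range Db := by
    refine mem_range_of_bound Db hDbsa g ((1 - ‖lam‖)⁻¹) ?_
    intro x
    rw [← inner_conj_symm, RCLike.norm_conj]
    exact hgx x
  -- the evaluation identity
  have hmain : ∀ z : ℂ, ‖z‖ < 1 →
      (z - lam) * H2eval g z + lam * (g 0 : ℂ) = b z - bseq 0 := by
    intro z hz
    have hzb : z ∈ Metric.ball (0:ℂ) 1 := mem_ball_zero_iff.mpr hz
    have hq1 := hq g z hz
    have hq2 := hq bseq z hz
    have he' : H2eval e z = H2eval g z - lam * H2eval (Sstar g) z := by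
      rw [← cond2, h2eval_sub _ _ hz, h2eval_smul _ _ hz]
    have e6 : H2eval bseq z = b z := hbseq z hzb
    have hze : z * H2eval e z = b z - bseq 0 := by rw [he, hq2, e6]
    linear_combination hze + lam * hq1 - z * he'
  have hg0 : lam * (g 0 : ℂ) = b lam - bseq 0 := by
    have h1 := hmain lam hlam'
    simpa using h1
  refine ⟨g, ?_, cond2, hmem⟩
  intro z hzb hzlam
  have hz : ‖z‖ < 1 := mem_ball_zero_iff.mp hzb
  have h2 := hmain z hz
  rw [eq_div_iff (sub_ne_zero.mpr hzlam)]
  linear_combination h2 - hg0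
end
end
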